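/- Let p be a prime and suppose that B ⊴ Γ are finite p-groups with B abelian, such that the homomorphism Γ/B → Aut(B) induced by conjugation is injective (equivalently, the centraliser of B in Γ equals B). Let r = rk(B). Then every abelian subgroup A of Γ satisfies [A : A ∩ B] ≤ [B : A ∩ B]^r. -/

import Mathlib

open Subgroup

private lemma quotPow_card_le {Y : Type*} [CommGroup Y] [Finite Y] {p r : ℕ} (hp : 1 < p)
    (S : Finset Y) (hcard : S.card = r) (hgen : Subgroup.closure (S : Set Y) = ⊤) :
    Nat.card (Y ⧸ (powMonoidHom p : Y →* Y).range) ≤ p ^ r := by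
  classical
  haveI : NeZero p := ⟨by omega⟩
  set N : Subgroup Y := (powMonoidHom p : Y →* Y).range with hN
  set Q := Y ⧸ N with hQdef
  have hQ : ∀ q : Q, q ^ p = 1 := by
    intro q
    induction q using QuotientGroup.induction_on with
    | H y =>
      rw [← QuotientGroup.mk_pow, QuotientGroup.eq_one_iff]
      exact ⟨y, rfl⟩
  set f : Y → (Multiplicative (ZMod p) →* Q) := fun y =>
    { toFun := fun a => (QuotientGroup.mk y : Q) ^ (Multiplicative.toAdd a).val
      map_one' := by simp [ZMod.val_zero]
      map_mul' := by
        intro a b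
        show _ ^ (Multiplicative.toAdd a + Multiplicative.toAdd b).val = _
        rw [ZMod.val_add, ← pow_eq_pow_mod _ (hQ _), pow_add] } with hf
  set Φ : ({ x // x ∈ S } → Multiplicative (ZMod p)) →* Q :=
    ∏ s : { x // x ∈ S }, (f s.1).comp (Pi.evalMonoidHom (fun _ => Multiplicative (ZMod p)) s) with hΦ
  have hsurj : Function.Surjective Φ := by
    rw [← MonoidHom.range_eq_top]
    have h1 : Subgroup.closure ((QuotientGroup.mk' N) '' S) = ⊤ := by
      rw [← MonoidHom.map_closure (QuotientGroup.mk' N), hgen]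
      exact Subgroup.map_top_of_surjective _ (QuotientGroup.mk'_surjective N)
    rw [eq_top_iff, ← h1, Subgroup.closure_le]
    rintro q ⟨y, hy, rfl⟩
    refine ⟨Pi.mulSingle (⟨y, hy⟩ : { x // x ∈ S }) (Multiplicative.ofAdd 1), ?_⟩
    rw [hΦ, MonoidHom.finset_prod_apply]
    rw [Fintype.prod_eq_single (⟨y, hy⟩ : { x // x ∈ S })]
    · show (f y) (Pi.mulSingle (M := fun _ => Multiplicative (ZMod p)) (⟨y, hy⟩ : { x // x ∈ S }) (Multiplicative.ofAdd 1) ⟨y, hy⟩) = _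
      rw [Pi.mulSingle_eq_same]
      show (QuotientGroup.mk y : Q) ^ (1 : ZMod p).val = _
      rw [ZMod.val_one_eq_one_mod, Nat.mod_eq_of_lt hp, pow_one]
      rfl
    · intro t ht
      show (f t.1) (Pi.mulSingle (M := fun _ => Multiplicative (ZMod p)) (⟨y, hy⟩ : { x // x ∈ S }) (Multiplicative.ofAdd 1) t) = 1
      rw [Pi.mulSingle_eq_of_ne ht]
      exact map_one _
  calc Nat.card Q ≤ Nat.card ({ x // x ∈ S } → Multiplicative (ZMod p)) :=
        Nat.card_le_card_of_surjective Φ hsurj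
    _ = p ^ r := by
        rw [Nat.card_fun]
        simp [hcard]

private lemma torsion_card_le {Y : Type*} [CommGroup Y] [Finite Y] {p : ℕ} (hp : 1 < p) :
    Nat.card {y : Y // y ^ p = 1} ≤ p ^ Group.rank Y := by
  obtain ⟨S, hcard, hgen⟩ := Group.rank_spec Y
  set ψ : Y →* Y := powMonoidHom p with hψ
  have h1 : Nat.card {y : Y // y ^ p = 1} = Nat.card ψ.ker := by
    apply Nat.card_congr
    exact Equiv.subtypeEquivRight (fun y => by simp [hψ, MonoidHom.mem_ker, powMonoidHom_apply])
  have h2 : Nat.card Y = Nat.card (Y ⧸ ψ.ker) * Nat.card ψ.ker :=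
    Subgroup.card_eq_card_quotient_mul_card_subgroup _
  have h3 : Nat.card Y = Nat.card (Y ⧸ ψ.range) * Nat.card ψ.range :=
    Subgroup.card_eq_card_quotient_mul_card_subgroup _
  have h4 : Nat.card (Y ⧸ ψ.ker) = Nat.card ψ.range :=
    Nat.card_congr (QuotientGroup.quotientKerEquivRange ψ).toEquiv
  have h5 : 0 < Nat.card ψ.range := Nat.card_pos
  have h6 : Nat.card ψ.ker = Nat.card (Y ⧸ ψ.range) := by
    have h7 := h2.symm.trans h3
    rw [h4] at h7
    exact Nat.eq_of_mul_eq_mul_left h5 (h7.trans (mul_comm _ _))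
  rw [h1, h6]
  exact quotPow_card_le hp S hcard hgen

universe u v

private lemma homcard_le {B' : Type v} [CommGroup B'] [Finite B'] {p r : ℕ} (hp : p.Prime)
    (htor : Nat.card {b : B' // b ^ p = 1} ≤ p ^ r) :
    ∀ (n : ℕ) (X : Type u) [CommGroup X] [Finite X], IsPGroup p X → Nat.card X ≤ n →
      Nat.card (X →* B') ≤ Nat.card X ^ r := by
  haveI : Fact p.Prime := ⟨hp⟩
  intro n
  induction n with
  | zero =>
    intro X _ _ _ hle
    exact absurd (Nat.card_pos.trans_le hle) (lt_irrefl 0)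
  | succ n ih =>
    intro X _ _ hX hle
    haveI : Finite (X →* B') := Finite.of_injective _ (DFunLike.coe_injective (F := X →* B'))
    obtain ⟨k, hk⟩ := (IsPGroup.iff_card (p := p) (G := X)).mp hX
    match k, hk with
    | 0, hk =>
      haveI : Subsingleton X := (Nat.card_eq_one_iff_unique.mp (by rw [hk, pow_zero])).1
      haveI : Unique (X →* B') :=
        { default := 1
          uniq := fun f => MonoidHom.ext fun x => by
            rw [Subsingleton.elim x 1, map_one]; rfl }
      rw [Nat.card_unique, hk, pow_zero, one_pow]
    | (m+1), hk =>
      obtain ⟨X', hX'⟩ := Sylow.exists_subgroup_card_pow_prime (G := X) p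
        (n := m) (by rw [hk]; exact pow_dvd_pow p m.le_succ)
      haveI : Finite (↥X' →* B') := Finite.of_injective _ (DFunLike.coe_injective (F := ↥X' →* B'))
      set res : (X →* B') →* (↥X' →* B') :=
        { toFun := fun F => F.comp X'.subtype
          map_one' := rfl
          map_mul' := fun _ _ => rfl } with hres
      have hcardlt : Nat.card X' < Nat.card X := by
        rw [hX', hk]
        exact Nat.pow_lt_pow_right hp.one_lt m.lt_succ_self
      have htopcard : Nat.card (⊤ : Subgroup X) = Nat.card X :=
        Nat.card_congr (Subgroup.topEquiv (G := X)).toEquiv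
      have hne : X' ≠ ⊤ := fun h => absurd (h ▸ htopcard : Nat.card X' = Nat.card X) hcardlt.ne
      obtain ⟨x₀, hx₀⟩ : ∃ x : X, x ∉ X' := by
        by_contra h
        push_neg at h
        exact hne ((Subgroup.eq_top_iff' X').mpr h)
      have hQcard : Nat.card (X ⧸ X') = p := by
        have h0 := Subgroup.card_eq_card_quotient_mul_card_subgroup X'
        rw [hk, hX'] at h0
        have hpos : 0 < p ^ m := pow_pos hp.pos m
        have h1 : p ^ m * p = Nat.card (X ⧸ X') * p ^ m := by rw [← h0, pow_succ]
        calc Nat.card (X ⧸ X') = Nat.card (X ⧸ X') * p ^ m / p ^ m := by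
              rw [Nat.mul_div_cancel _ hpos]
          _ = p ^ m * p / p ^ m := by rw [h1]
          _ = p := by rw [mul_comm, Nat.mul_div_cancel _ hpos]
      have hx₀p : x₀ ^ p ∈ X' := by
        have h2 : ((x₀ : X ⧸ X')) ^ p = 1 := by rw [← hQcard]; exact pow_card_eq_one'
        rwa [← QuotientGroup.mk_pow, QuotientGroup.eq_one_iff] at h2
      have hker : ∀ f : X →* B', f ∈ res.ker → ∀ x ∈ X', f x = 1 := by
        intro f hf x hx
        have h3 : f.comp X'.subtype = 1 := MonoidHom.mem_ker.mp hf
        exact congrFun (congrArg DFunLike.coe h3) ⟨x, hx⟩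
      have hkercard : Nat.card res.ker ≤ p ^ r := by
        have hinj : Function.Injective
            (fun f : res.ker => (⟨f.1 x₀, by rw [← map_pow]; exact hker f.1 f.2 _ hx₀p⟩ :
              {b : B' // b ^ p = 1})) := by
          intro f g hfg
          have hval : f.1 x₀ = g.1 x₀ := congrArg Subtype.val hfg
          have hJ : X' ⊔ Subgroup.closure {x₀} = ⊤ := by
            set J := X' ⊔ Subgroup.closure {x₀} with hJdef
            have hle' : X' ≤ J := le_sup_left
            have hx₀J : x₀ ∈ J := Subgroup.mem_sup_right (Subgroup.mem_closure_singleton.mpr ⟨1, zpow_one x₀⟩)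
            have hd1 : p ^ m ∣ Nat.card J := hX' ▸ Subgroup.card_dvd_of_le hle'
            have hd2 : Nat.card J ∣ p ^ (m + 1) := hk ▸ Subgroup.card_subgroup_dvd_card J
            obtain ⟨j, hj_le, hj⟩ := (Nat.dvd_prime_pow hp).mp hd2
            have hmj : m ≤ j := by
              rw [hj] at hd1
              exact (Nat.pow_dvd_pow_iff_le_right hp.one_lt).mp hd1
            rcases eq_or_lt_of_le hmj with hmj' | hmj'
            · exfalso
              have hXJ : X' = J := Subgroup.eq_of_le_of_card_ge hle'
                (by rw [hj, ← hmj', hX'])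
              exact hx₀ (hXJ ▸ hx₀J)
            · have hj' : j = m + 1 := le_antisymm hj_le hmj'
              exact Subgroup.eq_top_of_card_eq (H := J) (by rw [hj, hj', hk])
          apply Subtype.ext
          apply MonoidHom.ext
          intro x
          have hx : x ∈ X' ⊔ Subgroup.closure {x₀} := hJ ▸ Subgroup.mem_top x
          rw [Subgroup.mem_sup] at hx
          obtain ⟨y, hy, z, hz, rfl⟩ := hx
          obtain ⟨c, rfl⟩ := Subgroup.mem_closure_singleton.mp hz
          rw [map_mul, map_mul, map_zpow, map_zpow, hval,
            hker f.1 f.2 y hy, hker g.1 g.2 y hy]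
        exact (Nat.card_le_card_of_injective _ hinj).trans htor
      have hq1 : Nat.card (X →* B') =
          Nat.card ((X →* B') ⧸ res.ker) * Nat.card res.ker :=
        Subgroup.card_eq_card_quotient_mul_card_subgroup _
      have hq2 : Nat.card ((X →* B') ⧸ res.ker) = Nat.card res.range :=
        Nat.card_congr (QuotientGroup.quotientKerEquivRange res).toEquiv
      have hq3 : Nat.card res.range ≤ Nat.card (↥X' →* B') := Subgroup.card_le_card_group _
      have hih : Nat.card (↥X' →* B') ≤ Nat.card ↥X' ^ r := by
        apply ih
        · exact hX.to_subgroup X'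
        · have : Nat.card ↥X' < n + 1 := hcardlt.trans_le hle
          omega
      calc Nat.card (X →* B') = Nat.card ((X →* B') ⧸ res.ker) * Nat.card res.ker := hq1
        _ ≤ Nat.card (↥X' →* B') * (p ^ r) :=
            Nat.mul_le_mul (hq2 ▸ hq3) hkercard
        _ ≤ Nat.card ↥X' ^ r * p ^ r := Nat.mul_le_mul_right _ hih
        _ = (Nat.card ↥X' * p) ^ r := (mul_pow _ _ _).symm
        _ = Nat.card X ^ r := by rw [hX', hk, ← pow_succ]

/-- **Theorem.**
Let `B ⊴ Γ` be finite `p`-groups with `B` abelian such that the conjugation homomorphism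
`Γ/B → Aut(B)` is injective, i.e. the kernel of the conjugation map `Γ →* Aut(B)` is
exactly `B` (equivalently, the centraliser of `B` in `Γ` is `B`). If `r = rk(B)`, then
every abelian subgroup `A` of `Γ` satisfies `[A : A ∩ B] ≤ [B : A ∩ B]^r`. -/
theorem stmt_5 (p : ℕ) (hp : p.Prime) (Γ : Type*) [Group Γ] [Finite Γ]
    (hΓ : IsPGroup p Γ) (B : Subgroup Γ) [B.Normal] (hB : IsMulCommutative B)
    (hker : (MulAut.conjNormal : Γ →* MulAut B).ker = B)
    (r : ℕ) (hr : r = Group.rank B)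
    (A : Subgroup Γ) (hA : IsMulCommutative A) :
    (A ⊓ B).relIndex A ≤ ((A ⊓ B).relIndex B) ^ r := by
  haveI := hB
  haveI := hA
  haveI : Fact p.Prime := ⟨hp⟩
  set C : Subgroup Γ := A ⊓ B with hCdef
  have hcommB : ∀ x y : Γ, x ∈ B → y ∈ B → x * y = y * x := fun x y hx hy =>
    Subgroup.mul_comm_of_mem_isMulCommutative (H := B) hx hy
  have hcommA : ∀ x y : Γ, x ∈ A → y ∈ A → x * y = y * x := fun x y hx hy =>
    Subgroup.mul_comm_of_mem_isMulCommutative (H := A) hx hy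
  have hconj_eq : ∀ x y : Γ, x ∈ B → y ∈ B → y⁻¹ * x * y = x := by
    intro x y hx hy
    rw [mul_assoc, hcommB x y hx hy, ← mul_assoc, inv_mul_cancel, one_mul]
  have hmem : ∀ (x : Γ) (b : ↥B), x⁻¹ * (b : Γ)⁻¹ * x * b ∈ B := by
    intro x b
    have h1 : x⁻¹ * (b : Γ)⁻¹ * x ∈ B := by
      have h2 := Subgroup.Normal.conj_mem ‹B.Normal› _ (inv_mem b.2) x⁻¹
      simpa using h2
    exact mul_mem h1 b.2
  -- the commutator homomorphism
  set f : ↥A → (↥B →* ↥B) := fun a =>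
    { toFun := fun b => ⟨(a : Γ)⁻¹ * (b : Γ)⁻¹ * (a : Γ) * (b : Γ), hmem a b⟩
      map_one' := by
        apply Subtype.ext
        simp
      map_mul' := by
        intro b₁ b₂
        apply Subtype.ext
        have m1 : (a : Γ)⁻¹ * (b₁ : Γ)⁻¹ * (a : Γ) * (b₁ : Γ) ∈ B := hmem a b₁
        have m2 : (a : Γ)⁻¹ * (b₂ : Γ)⁻¹ * (a : Γ) * (b₂ : Γ) ∈ B := hmem a b₂
        show (a : Γ)⁻¹ * ((b₁ : Γ) * (b₂ : Γ))⁻¹ * (a : Γ) * ((b₁ : Γ) * (b₂ : Γ))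
          = ((a : Γ)⁻¹ * (b₁ : Γ)⁻¹ * (a : Γ) * (b₁ : Γ))
            * ((a : Γ)⁻¹ * (b₂ : Γ)⁻¹ * (a : Γ) * (b₂ : Γ))
        calc (a : Γ)⁻¹ * ((b₁ : Γ) * (b₂ : Γ))⁻¹ * (a : Γ) * ((b₁ : Γ) * (b₂ : Γ))
            = ((a : Γ)⁻¹ * (b₂ : Γ)⁻¹ * (a : Γ) * (b₂ : Γ))
              * ((b₂ : Γ)⁻¹ * ((a : Γ)⁻¹ * (b₁ : Γ)⁻¹ * (a : Γ) * (b₁ : Γ)) * (b₂ : Γ)) := by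
              group
          _ = ((a : Γ)⁻¹ * (b₂ : Γ)⁻¹ * (a : Γ) * (b₂ : Γ))
              * ((a : Γ)⁻¹ * (b₁ : Γ)⁻¹ * (a : Γ) * (b₁ : Γ)) := by
              rw [hconj_eq _ _ m1 b₂.2]
          _ = _ := hcommB _ _ m2 m1 } with hf
  set Q := ↥B ⧸ C.subgroupOf B with hQdef
  have hf_one : ∀ (a : ↥A) (b : ↥B), b ∈ C.subgroupOf B → f a b = 1 := by
    intro a b hb
    rw [Subgroup.mem_subgroupOf] at hb
    have hbA : (b : Γ) ∈ A := hb.1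
    apply Subtype.ext
    show (a : Γ)⁻¹ * (b : Γ)⁻¹ * (a : Γ) * (b : Γ) = ((1 : ↥B) : Γ)
    have h1 : (a : Γ) * (b : Γ) = (b : Γ) * (a : Γ) := hcommA _ _ a.2 hbA
    calc (a : Γ)⁻¹ * (b : Γ)⁻¹ * (a : Γ) * (b : Γ)
        = (a : Γ)⁻¹ * (b : Γ)⁻¹ * ((a : Γ) * (b : Γ)) := by group
      _ = (a : Γ)⁻¹ * (b : Γ)⁻¹ * ((b : Γ) * (a : Γ)) := by rw [h1]
      _ = 1 := by group
    
  set F : ↥A → (Q →* ↥B) := fun a => QuotientGroup.lift (C.subgroupOf B) (f a) (hf_one a)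
    with hF
  have hFmk : ∀ (a : ↥A) (b : ↥B), F a ((b : Q)) = f a b := by
    intro a b
    rfl
  -- well-definedness on cosets
  have hwd : ∀ a a' : ↥A, ((a : Γ))⁻¹ * (a' : Γ) ∈ B → F a = F a' := by
    intro a a' hcB
    apply MonoidHom.ext
    intro q
    induction q using QuotientGroup.induction_on with
    | H b =>
      rw [hFmk, hFmk]
      apply Subtype.ext
      show (a : Γ)⁻¹ * (b : Γ)⁻¹ * (a : Γ) * (b : Γ)
        = (a' : Γ)⁻¹ * (b : Γ)⁻¹ * (a' : Γ) * (b : Γ)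
      have ha' : (a' : Γ) = (a : Γ) * ((a : Γ)⁻¹ * (a' : Γ)) := by group
      rw [ha']
      set c : Γ := (a : Γ)⁻¹ * (a' : Γ) with hc
      calc (a : Γ)⁻¹ * (b : Γ)⁻¹ * (a : Γ) * (b : Γ)
          = c⁻¹ * ((a : Γ)⁻¹ * (b : Γ)⁻¹ * (a : Γ) * (b : Γ)) * c := by
            rw [hconj_eq _ _ (hmem a b) hcB]
        _ = c⁻¹ * ((a : Γ)⁻¹ * (b : Γ)⁻¹ * (a : Γ) * (b : Γ)) * ((b : Γ)⁻¹ * c * (b : Γ)) := by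
            rw [hconj_eq _ _ hcB b.2]
        _ = ((a : Γ) * c)⁻¹ * (b : Γ)⁻¹ * ((a : Γ) * c) * (b : Γ) := by group
  -- the map on the coset space
  set Fbar : (↥A ⧸ C.subgroupOf A) → (Q →* ↥B) :=
    Quotient.lift F (by
      intro a a' hrel
      have hrel' : (a : ↥A)⁻¹ * a' ∈ C.subgroupOf A := QuotientGroup.leftRel_apply.mp hrel
      rw [Subgroup.mem_subgroupOf] at hrel'
      have : ((a⁻¹ * a' : ↥A) : Γ) ∈ B := hrel'.2
      exact hwd a a' (by simpa using this)) with hFbar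
  have hFbar_mk : ∀ a : ↥A, Fbar ((a : ↥A ⧸ C.subgroupOf A)) = F a := fun a => rfl
  -- injectivity
  have hinj : Function.Injective Fbar := by
    intro q1 q2 h
    induction q1 using QuotientGroup.induction_on with
    | H a =>
    induction q2 using QuotientGroup.induction_on with
    | H a' =>
      rw [hFbar_mk, hFbar_mk] at h
      rw [QuotientGroup.eq, Subgroup.mem_subgroupOf]
      have hcoe : ((a⁻¹ * a' : ↥A) : Γ) = (a : Γ)⁻¹ * (a' : Γ) := rfl
      rw [hcoe, hCdef, Subgroup.mem_inf]
      refine ⟨by rw [← hcoe]; exact SetLike.coe_mem _, ?_⟩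
      -- the Γ-level element
      set c : Γ := (a : Γ)⁻¹ * (a' : Γ) with hc
      have heq : ∀ b : ↥B, (a : Γ)⁻¹ * (b : Γ)⁻¹ * (a : Γ) * (b : Γ)
          = (a' : Γ)⁻¹ * (b : Γ)⁻¹ * (a' : Γ) * (b : Γ) := by
        intro b
        have h0 := DFunLike.congr_fun h ((b : Q))
        rw [hFmk, hFmk] at h0
        exact congrArg Subtype.val h0
      have heq2 : ∀ v : Γ, v ∈ B → (a : Γ)⁻¹ * v * (a : Γ) = (a' : Γ)⁻¹ * v * (a' : Γ) := by
        intro v hv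
        have h0 := heq ⟨v⁻¹, inv_mem hv⟩
        have h1 : (a : Γ)⁻¹ * v⁻¹⁻¹ * (a : Γ) * v⁻¹
            = (a' : Γ)⁻¹ * v⁻¹⁻¹ * (a' : Γ) * v⁻¹ := h0
        rw [inv_inv] at h1
        exact mul_right_cancel h1
      have key : ∀ v : Γ, v ∈ B → c * v * c⁻¹ = v := by
        intro v hv
        have hb : (a : Γ) * v * (a : Γ)⁻¹ ∈ B := Subgroup.Normal.conj_mem ‹B.Normal› v hv (a : Γ)
        have h1 := heq2 _ hb
        have h2 : v = (a' : Γ)⁻¹ * ((a : Γ) * v * (a : Γ)⁻¹) * (a' : Γ) := by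
          rw [← h1]; group
        have h3 : (a' : Γ) * v * (a' : Γ)⁻¹ = (a : Γ) * v * (a : Γ)⁻¹ := by
          nth_rewrite 1 [h2]; group
        calc c * v * c⁻¹ = (a : Γ)⁻¹ * ((a' : Γ) * v * (a' : Γ)⁻¹) * (a : Γ) := by
              rw [hc]; group
          _ = (a : Γ)⁻¹ * ((a : Γ) * v * (a : Γ)⁻¹) * (a : Γ) := by rw [h3]
          _ = v := by group
      have hckr : c ∈ (MulAut.conjNormal : Γ →* MulAut B).ker := by
        rw [MonoidHom.mem_ker]
        apply MulEquiv.ext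
        intro b
        apply Subtype.ext
        have h4 : ((MulAut.conjNormal c) b : Γ) = c * (b : Γ) * c⁻¹ :=
          MulAut.conjNormal_apply c b
        rw [h4]
        have h5 : (((1 : MulAut ↥B)) b : Γ) = (b : Γ) := rfl
        rw [h5]
        exact key _ b.2
      rw [hker] at hckr
      exact hckr
  -- counting
  haveI : Finite (Q →* ↥B) := Finite.of_injective _ (DFunLike.coe_injective (F := Q →* ↥B))
  have hcount1 : Nat.card (↥A ⧸ C.subgroupOf A) ≤ Nat.card (Q →* ↥B) :=
    Nat.card_le_card_of_injective Fbar hinj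
  have htor : Nat.card {b : ↥B // b ^ p = 1} ≤ p ^ r := by
    rw [hr]
    exact (open scoped IsMulCommutative in torsion_card_le hp.one_lt)
  have hQp : IsPGroup p Q := (hΓ.to_subgroup B).to_quotient _
  have hhom : Nat.card (Q →* ↥B) ≤ Nat.card Q ^ r :=
    open scoped IsMulCommutative in homcard_le hp htor (Nat.card Q) Q hQp le_rfl
  have e1 : C.relIndex A = Nat.card (↥A ⧸ C.subgroupOf A) := rfl
  have e2 : C.relIndex B = Nat.card Q := rfl
  rw [e1, e2]
  exact hcount1.trans hhom
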